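/- If B is a generating subset of a finite abelian group G of rank r, then the subset-sum set B* = {∑_{a∈A} a : A ⊆ B} satisfies |B*| ≥ 2^r. -/

import Mathlib

open Finset Pointwise

/-- The subset-sum set of a finite set `B`: all sums `∑_{a ∈ A} a` over `A ⊆ B`. -/
def subsetSums {G : Type*} [AddCommMonoid G] [DecidableEq G] (B : Finset G) : Finset G :=
  B.powerset.image fun A => A.sum id

theorem stmt0 {G : Type*} [AddCommGroup G] [Fintype G] [DecidableEq G]
    (r : ℕ)
    (hr : IsLeast {n : ℕ | ∃ S : Finset G, S.card = n ∧
            AddSubgroup.closure (S : Set G) = ⊤} r)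
    (B : Finset G) (hB : AddSubgroup.closure (B : Set G) = ⊤) :
    2 ^ r ≤ (subsetSums B).card := by
  classical
  obtain ⟨S, hS, hmin⟩ := Finset.exists_minimal
    (s := B.powerset.filter fun S : Finset G => AddSubgroup.closure (S : Set G) = ⊤)
    ⟨B, by simp [hB]⟩
  simp only [mem_filter, mem_powerset] at hS
  obtain ⟨hSB, hSgen⟩ := hS
  have hrS : r ≤ S.card := hr.2 ⟨S, rfl, hSgen⟩
  -- main: if two subsets of S have equal sums and some element is in one but not the other,
  -- we get a contradiction with minimality
  have main : ∀ A A' : Finset G, A ⊆ S → A' ⊆ S → A.sum id = A'.sum id →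
      ∀ a ∈ A, a ∉ A' → False := by
    intro A A' hA hA' hsum a ha ha'
    have h1 : (A \ A').sum id + (A ∩ A').sum id = A.sum id := by
      rw [← Finset.sdiff_inter_self_left]
      exact Finset.sum_sdiff Finset.inter_subset_left
    have h2 : (A' \ A).sum id + (A ∩ A').sum id = A'.sum id := by
      rw [Finset.inter_comm, ← Finset.sdiff_inter_self_left]
      exact Finset.sum_sdiff Finset.inter_subset_left
    have hD : (A \ A').sum id = (A' \ A).sum id :=
      add_right_cancel (h1.trans (hsum.trans h2.symm))
    have haD : a ∈ A \ A' := Finset.mem_sdiff.mpr ⟨ha, ha'⟩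
    have hsplit : id a + ((A \ A').erase a).sum id = (A \ A').sum id :=
      Finset.add_sum_erase _ id haD
    have haval : a = (A' \ A).sum id - ((A \ A').erase a).sum id :=
      eq_sub_of_add_eq (hsplit.trans hD)
    -- S.erase a still generates
    set H := AddSubgroup.closure ((S.erase a : Finset G) : Set G) with hH
    have hsub1 : (A' \ A : Finset G) ⊆ S.erase a := by
      intro x hx
      rw [Finset.mem_sdiff] at hx
      exact Finset.mem_erase.mpr ⟨fun h => hx.2 (h ▸ ha), hA' hx.1⟩
    have hsub2 : ((A \ A').erase a : Finset G) ⊆ S.erase a := by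
      intro x hx
      rw [Finset.mem_erase, Finset.mem_sdiff] at hx
      exact Finset.mem_erase.mpr ⟨hx.1, hA hx.2.1⟩
    have haH : a ∈ H := by
      rw [haval]
      refine sub_mem (AddSubgroup.sum_mem _ fun x hx => ?_)
        (AddSubgroup.sum_mem _ fun x hx => ?_)
      · exact AddSubgroup.subset_closure (hsub1 hx)
      · exact AddSubgroup.subset_closure (hsub2 hx)
    have hHtop : AddSubgroup.closure ((S.erase a : Finset G) : Set G) = ⊤ := by
      rw [eq_top_iff, ← hSgen]
      rw [AddSubgroup.closure_le]
      intro s hs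
      by_cases hsa : s = a
      · subst hsa; exact haH
      · exact AddSubgroup.subset_closure
          (by exact_mod_cast Finset.mem_erase.mpr ⟨hsa, by exact_mod_cast hs⟩)
    have hmem : S.erase a ∈ B.powerset.filter
        fun T : Finset G => AddSubgroup.closure (T : Set G) = ⊤ := by
      simp only [mem_filter, mem_powerset]
      exact ⟨(Finset.erase_subset _ _).trans hSB, hHtop⟩
    exact (Finset.erase_ssubset (hA ha)).not_ge (hmin hmem (Finset.erase_ssubset (hA ha)).le)
  -- injectivity of subset sums on S
  have key : Set.InjOn (fun A : Finset G => A.sum id) S.powerset := by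
    intro A hA A' hA' hsum
    simp only [Finset.coe_powerset, Set.mem_preimage, Set.mem_powerset_iff,
      Finset.coe_subset] at hA hA'
    by_contra hne
    by_cases hsub : A ⊆ A'
    · have : ∃ a ∈ A', a ∉ A := by
        by_contra h
        push_neg at h
        exact hne (Finset.Subset.antisymm hsub h)
      obtain ⟨a, ha, ha'⟩ := this
      exact main A' A hA' hA hsum.symm a ha ha'
    · obtain ⟨a, ha, ha'⟩ := Finset.not_subset.mp hsub
      exact main A A' hA hA' hsum a ha ha'
  have hcard : (subsetSums S).card = 2 ^ S.card := by
    rw [subsetSums, Finset.card_image_of_injOn key, Finset.card_powerset]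
  have hsubset : subsetSums S ⊆ subsetSums B :=
    Finset.image_subset_image (Finset.powerset_mono.mpr hSB)
  calc 2 ^ r ≤ 2 ^ S.card := Nat.pow_le_pow_right (by norm_num) hrS
    _ = (subsetSums S).card := hcard.symm
    _ ≤ (subsetSums B).card := Finset.card_le_card hsubset
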